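/- Let f(q) = 3k⁴q⁴ - (8k⁴ + 2k²)q³ + (8k⁴ + 4k²)q² - (8k² - 2)q + 1 for modulus k ∈ (0,1). Then f'(q) = 12k⁴(q - 1/(2k²))(q - 1 - √(3-3k²)/(3k))(q - 1 + √(3-3k²)/(3k)); the critical point q₀ = 1 - √(3-3k²)/(3k) is negative if and only if k ∈ (0, 1/2); and f has two negative real roots q₂ < q₀ < q₁ < 0 (with -1/k < q₂) if and only if k ∈ (0, (√6 - √2)/4), a double negative root when k = (√6 - √2)/4, and no negative roots when k ∈ ((√6 - √2)/4, 1). -/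

import Mathlib

/-- The quartic `f(q) = 3k⁴q⁴ - (8k⁴+2k²)q³ + (8k⁴+4k²)q² - (8k²-2)q + 1`. -/
noncomputable def fquartic (k q : ℝ) : ℝ :=
  3 * k ^ 4 * q ^ 4 - (8 * k ^ 4 + 2 * k ^ 2) * q ^ 3
    + (8 * k ^ 4 + 4 * k ^ 2) * q ^ 2 - (8 * k ^ 2 - 2) * q + 1

/-- The critical point `q₀ = 1 - √(3-3k²)/(3k)`. -/
noncomputable def qzero (k : ℝ) : ℝ := 1 - Real.sqrt (3 - 3 * k ^ 2) / (3 * k)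

lemma fquartic_hasDerivAt (k q : ℝ) :
    HasDerivAt (fquartic k)
      (12*k^4*q^3 - (24*k^4+6*k^2)*q^2 + (16*k^4+8*k^2)*q - (8*k^2-2)) q := by
  have h := (((((hasDerivAt_pow 4 q).const_mul (3*k^4)).sub
      ((hasDerivAt_pow 3 q).const_mul (8*k^4+2*k^2))).add
      ((hasDerivAt_pow 2 q).const_mul (8*k^4+4*k^2))).sub
      ((hasDerivAt_id q).const_mul (8*k^2-2))).add_const 1
  convert h using 2 with x
  · rfl
  · rfl
  · simp [fquartic]
  · ring
  · ring

lemma fquartic_cont (k : ℝ) : Continuous (fquartic k) := by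
  unfold fquartic; fun_prop

lemma sqs (k : ℝ) (hk : k ∈ Set.Ioo (0:ℝ) 1) :
    Real.sqrt (3 - 3*k^2) ^ 2 = 3 - 3*k^2 := by
  apply Real.sq_sqrt; nlinarith [hk.1, hk.2]

lemma sqpos (k : ℝ) (hk : k ∈ Set.Ioo (0:ℝ) 1) : 0 < Real.sqrt (3 - 3*k^2) := by
  apply Real.sqrt_pos.2; nlinarith [hk.1, hk.2]

/-- The factorization of the derivative. -/
lemma deriv_factor (k : ℝ) (hk : k ∈ Set.Ioo (0:ℝ) 1) (q : ℝ) :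
    deriv (fquartic k) q =
      12 * k ^ 4 * (q - 1 / (2 * k ^ 2))
        * (q - 1 - Real.sqrt (3 - 3 * k ^ 2) / (3 * k))
        * (q - 1 + Real.sqrt (3 - 3 * k ^ 2) / (3 * k)) := by
  rw [(fquartic_hasDerivAt k q).deriv]
  have hs := sqs k hk
  set s := Real.sqrt (3 - 3*k^2) with hsdef
  have hk0 : k ≠ 0 := ne_of_gt hk.1
  field_simp
  linear_combination (24*k^2*q - 12) * hs

/-- Key formula for `f(q₀)`. -/
lemma key_F (k : ℝ) (hk : k ∈ Set.Ioo (0:ℝ) 1) :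
    9*k*(fquartic k (qzero k)) =
      4*(1-k^2)*(6*k*(1-k^2) + (2*k^2-1)*Real.sqrt (3 - 3*k^2)) := by
  have hs := sqs k hk
  set s := Real.sqrt (3 - 3*k^2) with hsdef
  have hk0 : k ≠ 0 := ne_of_gt hk.1
  unfold qzero fquartic
  rw [show 3 - 3*k^2 = 3 - 3*k^2 from rfl, ← hsdef]
  field_simp
  linear_combination (9*k*s^2 + (18-36*k^2)*s + 27*k^3 - 27*k) * hs

lemma kstar_sq : ((Real.sqrt 6 - Real.sqrt 2)/4)^2 = (2 - Real.sqrt 3)/4 := by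
  have e6 : Real.sqrt 6 ^ 2 = 6 := Real.sq_sqrt (by norm_num)
  have e2 : Real.sqrt 2 ^ 2 = 2 := Real.sq_sqrt (by norm_num)
  have h62 : Real.sqrt 6 * Real.sqrt 2 = 2 * Real.sqrt 3 := by
    rw [← Real.sqrt_mul (by norm_num : (0:ℝ) ≤ 6)]
    rw [show (6:ℝ)*2 = 2^2*3 by norm_num, Real.sqrt_mul (by positivity), Real.sqrt_sq (by norm_num : (0:ℝ) ≤ 2)]
  linear_combination e6/16 + e2/16 - h62/8

lemma sqrt3_lt : 1 < Real.sqrt 3 ∧ Real.sqrt 3 < 2 := by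
  constructor
  · nlinarith [Real.sq_sqrt (by norm_num : (0:ℝ) ≤ 3), Real.sqrt_nonneg 3]
  · nlinarith [Real.sq_sqrt (by norm_num : (0:ℝ) ≤ 3), Real.sqrt_nonneg 3]

lemma kstar_pos : 0 < (Real.sqrt 6 - Real.sqrt 2)/4 := by
  have h : Real.sqrt 2 < Real.sqrt 6 := by
    apply Real.sqrt_lt_sqrt <;> norm_num
  linarith

lemma kstar_lt_half : (Real.sqrt 6 - Real.sqrt 2)/4 < 1/2 := by
  have := kstar_sq
  have h3 := sqrt3_lt
  nlinarith [kstar_pos]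

/-- `k < k*` iff the discriminant quantity is positive (with `2k² < 1`). -/
lemma klt_iff (k : ℝ) (hk : k ∈ Set.Ioo (0:ℝ) 1) :
    k < (Real.sqrt 6 - Real.sqrt 2)/4 ↔ (0 < 16*k^4 - 16*k^2 + 1 ∧ 2*k^2 < 1) := by
  have hks := kstar_sq
  have h3 := sqrt3_lt
  have h3n : 0 ≤ Real.sqrt 3 := Real.sqrt_nonneg 3
  have e3 : Real.sqrt 3 ^ 2 = 3 := Real.sq_sqrt (by norm_num)
  constructor
  · intro h
    have hsq : k^2 < ((Real.sqrt 6 - Real.sqrt 2)/4)^2 := by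
      apply pow_lt_pow_left₀ h hk.1.le
      norm_num
    rw [hks] at hsq
    have h1 : 4*k^2 < 2 - Real.sqrt 3 := by linarith
    constructor
    · nlinarith
    · nlinarith
  · rintro ⟨h1, h2⟩
    have hpos : 0 < 2 - 4*k^2 := by linarith
    have hlt : Real.sqrt 3 < 2 - 4*k^2 := by
      apply lt_of_pow_lt_pow_left₀ 2 hpos.le
      nlinarith
    have : k^2 < ((Real.sqrt 6 - Real.sqrt 2)/4)^2 := by rw [hks]; linarith
    exact lt_of_pow_lt_pow_left₀ 2 kstar_pos.le this

lemma keq_facts (k : ℝ) (hkeq : k = (Real.sqrt 6 - Real.sqrt 2)/4) :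
    16*k^4 - 16*k^2 + 1 = 0 ∧ 2*k^2 < 1 := by
  subst hkeq
  have hks := kstar_sq
  have e3 : Real.sqrt 3 ^ 2 = 3 := Real.sq_sqrt (by norm_num)
  have h3 := sqrt3_lt
  constructor
  · nlinarith
  · nlinarith

/-- sign of `G = 6k(1-k²) + (2k²-1)s`. -/
lemma G_neg (k : ℝ) (hk : k ∈ Set.Ioo (0:ℝ) 1) (h1 : 0 < 16*k^4 - 16*k^2 + 1)
    (h2 : 2*k^2 < 1) :
    6*k*(1-k^2) + (2*k^2-1)*Real.sqrt (3 - 3*k^2) < 0 := by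
  have hs := sqs k hk
  have hsp := sqpos k hk
  set s := Real.sqrt (3 - 3*k^2)
  have hk0 := hk.1
  have hk1 := hk.2
  have key : 6*k*(1-k^2) < (1-2*k^2)*s := by
    apply lt_of_pow_lt_pow_left₀ 2 (by nlinarith : (0:ℝ) ≤ (1-2*k^2)*s)
    nlinarith
  nlinarith

lemma G_eq (k : ℝ) (hk : k ∈ Set.Ioo (0:ℝ) 1) (h1 : 16*k^4 - 16*k^2 + 1 = 0)
    (h2 : 2*k^2 < 1) :
    6*k*(1-k^2) + (2*k^2-1)*Real.sqrt (3 - 3*k^2) = 0 := by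
  have hs := sqs k hk
  have hsp := sqpos k hk
  set s := Real.sqrt (3 - 3*k^2)
  have hk0 := hk.1
  have hk1 := hk.2
  have key : 6*k*(1-k^2) = (1-2*k^2)*s := by
    have ha : (0:ℝ) ≤ 6*k*(1-k^2) := by nlinarith
    have hb : (0:ℝ) ≤ (1-2*k^2)*s := by nlinarith
    have hsq : (6*k*(1-k^2))^2 = ((1-2*k^2)*s)^2 := by nlinarith
    calc 6*k*(1-k^2) = Real.sqrt ((6*k*(1-k^2))^2) := (Real.sqrt_sq ha).symm
      _ = Real.sqrt (((1-2*k^2)*s)^2) := by rw [hsq]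
      _ = (1-2*k^2)*s := Real.sqrt_sq hb
  linarith [key]

lemma G_pos (k : ℝ) (hk : k ∈ Set.Ioo (0:ℝ) 1) (hkgt : (Real.sqrt 6 - Real.sqrt 2)/4 < k) :
    0 < 6*k*(1-k^2) + (2*k^2-1)*Real.sqrt (3 - 3*k^2) := by
  have hs := sqs k hk
  have hsp := sqpos k hk
  set s := Real.sqrt (3 - 3*k^2)
  have hk0 := hk.1
  have hk1 := hk.2
  rcases le_or_gt 1 (2*k^2) with h | h
  · nlinarith
  · -- 16k⁴-16k²+1 < 0
    have hks := kstar_sq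
    have e3 : Real.sqrt 3 ^ 2 = 3 := Real.sq_sqrt (by norm_num)
    have hsq : ((Real.sqrt 6 - Real.sqrt 2)/4)^2 < k^2 :=
      pow_lt_pow_left₀ hkgt kstar_pos.le (by norm_num)
    rw [hks] at hsq
    have hlt : 2 - 4*k^2 < Real.sqrt 3 := by linarith
    have hd : 16*k^4 - 16*k^2 + 1 < 0 := by nlinarith [Real.sqrt_nonneg 3]
    have key : (1-2*k^2)*s < 6*k*(1-k^2) := by
      apply lt_of_pow_lt_pow_left₀ 2 (by nlinarith)
      nlinarith
    linarith

lemma strictAnti_f (k : ℝ) (hk : k ∈ Set.Ioo (0:ℝ) 1) :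
    StrictAntiOn (fquartic k) (Set.Iic (min (qzero k) 0)) := by
  apply strictAntiOn_of_deriv_neg (convex_Iic _) (fquartic_cont k).continuousOn
  intro x hx
  rw [interior_Iic] at hx
  have hx0 : x < 0 := lt_of_lt_of_le hx (min_le_right _ _)
  have hxq : x < qzero k := lt_of_lt_of_le hx (min_le_left _ _)
  rw [deriv_factor k hk]
  have hsp := sqpos k hk
  have hk0 := hk.1
  have h1 : 12 * k ^ 4 * (x - 1 / (2 * k ^ 2)) < 0 := by
    have h1a : 0 < 1/(2*k^2) := by positivity
    have h1b : x - 1/(2*k^2) < 0 := by linarith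
    exact mul_neg_of_pos_of_neg (by positivity) h1b
  have h2 : x - 1 - Real.sqrt (3 - 3*k^2) / (3*k) < 0 := by
    have : 0 < Real.sqrt (3 - 3*k^2) / (3*k) := by positivity
    linarith
  have h3 : x - 1 + Real.sqrt (3 - 3*k^2) / (3*k) < 0 := by
    unfold qzero at hxq; linarith
  exact mul_neg_of_pos_of_neg (mul_pos_of_neg_of_neg h1 h2) h3

lemma strictMono_f (k : ℝ) (hk : k ∈ Set.Ioo (0:ℝ) 1) (hq0 : qzero k ≤ 0) :
    StrictMonoOn (fquartic k) (Set.Icc (qzero k) 0) := by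
  apply strictMonoOn_of_deriv_pos (convex_Icc _ _) (fquartic_cont k).continuousOn
  intro x hx
  rw [interior_Icc] at hx
  obtain ⟨hxl, hxr⟩ := hx
  rw [deriv_factor k hk]
  have hsp := sqpos k hk
  have hk0 := hk.1
  have h1 : 12 * k ^ 4 * (x - 1 / (2 * k ^ 2)) < 0 := by
    have h1a : 0 < 1/(2*k^2) := by positivity
    have h1b : x - 1/(2*k^2) < 0 := by linarith
    exact mul_neg_of_pos_of_neg (by positivity) h1b
  have h2 : x - 1 - Real.sqrt (3 - 3*k^2) / (3*k) < 0 := by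
    have : 0 < Real.sqrt (3 - 3*k^2) / (3*k) := by positivity
    linarith
  have h3 : 0 < x - 1 + Real.sqrt (3 - 3*k^2) / (3*k) := by
    unfold qzero at hxl; linarith
  exact mul_pos (mul_pos_of_neg_of_neg h1 h2) h3

lemma f_zero (k : ℝ) : fquartic k 0 = 1 := by simp [fquartic]

lemma f_m1k (k : ℝ) (hk0 : k ≠ 0) : fquartic k (-1/k) = 8*(k+1)^2 := by
  unfold fquartic; field_simp; ring

/-- the factorization of `f'`, the negativity criterion for `q₀`, and the
classification of negative roots of `f` according to the position of `k` relative to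
`(√6 - √2)/4`. -/
theorem fquartic_negative_roots (k : ℝ) (hk : k ∈ Set.Ioo (0:ℝ) 1) :
    (∀ q : ℝ, deriv (fquartic k) q =
      12 * k ^ 4 * (q - 1 / (2 * k ^ 2))
        * (q - 1 - Real.sqrt (3 - 3 * k ^ 2) / (3 * k))
        * (q - 1 + Real.sqrt (3 - 3 * k ^ 2) / (3 * k))) ∧
    (qzero k < 0 ↔ k < 1 / 2) ∧
    ((∃ q1 q2 : ℝ, -1 / k < q2 ∧ q2 < qzero k ∧ qzero k < q1 ∧ q1 < 0 ∧
        fquartic k q2 = 0 ∧ fquartic k q1 = 0)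
      ↔ k < (Real.sqrt 6 - Real.sqrt 2) / 4) ∧
    (k = (Real.sqrt 6 - Real.sqrt 2) / 4 →
      qzero k < 0 ∧ fquartic k (qzero k) = 0 ∧ deriv (fquartic k) (qzero k) = 0) ∧
    ((Real.sqrt 6 - Real.sqrt 2) / 4 < k →
      ∀ q : ℝ, q < 0 → fquartic k q ≠ 0) := by
  have hk0 := hk.1
  have hk1 := hk.2
  have hs := sqs k hk
  have hsp := sqpos k hk
  have hkey := key_F k hk
  have h3k : (0:ℝ) < 3*k := by linarith
  -- part 2
  have part2 : qzero k < 0 ↔ k < 1 / 2 := by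
    unfold qzero
    constructor
    · intro h
      have h1 : 3*k < Real.sqrt (3 - 3*k^2) := by
        have := (one_lt_div h3k).mp (by linarith)
        linarith
      have h2 : (3*k)^2 < Real.sqrt (3-3*k^2)^2 := pow_lt_pow_left₀ h1 h3k.le (by norm_num)
      nlinarith
    · intro h
      have h2 : (3*k)^2 < Real.sqrt (3-3*k^2)^2 := by nlinarith
      have h1 : 3*k < Real.sqrt (3 - 3*k^2) :=
        lt_of_pow_lt_pow_left₀ 2 (Real.sqrt_nonneg _) h2
      have : 1 < Real.sqrt (3 - 3*k^2) / (3*k) := (one_lt_div h3k).mpr (by linarith)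
      linarith
  refine ⟨deriv_factor k hk, part2, ?_, ?_, ?_⟩
  · -- part 3
    constructor
    · rintro ⟨q1, q2, hq2l, hq2r, hq1l, hq1r, hf2, hf1⟩
      by_contra hnk
      push_neg at hnk
      have hq0 : qzero k ≤ 0 := le_of_lt (lt_trans hq1l hq1r)
      have hF : 0 ≤ fquartic k (qzero k) := by
        rcases eq_or_lt_of_le hnk with heq | hlt
        · have := G_eq k hk (keq_facts k heq.symm).1 (keq_facts k heq.symm).2
          nlinarith
        · have := G_pos k hk hlt
          nlinarith
      have := strictMono_f k hk hq0 ⟨le_refl _, hq0⟩ ⟨hq1l.le, hq1r.le⟩ hq1l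
      rw [hf1] at this
      linarith
    · intro hklt
      obtain ⟨hd, h2k⟩ := (klt_iff k hk).mp hklt
      have hG := G_neg k hk hd h2k
      have hF : fquartic k (qzero k) < 0 := by nlinarith
      have hq0 : qzero k < 0 := part2.mpr (lt_trans hklt kstar_lt_half)
      have hm1 : -1/k < qzero k := by
        have hss : Real.sqrt (3-3*k^2) < 3*k + 3 := by
          apply lt_of_pow_lt_pow_left₀ 2 (by linarith)
          nlinarith
        have hdd : Real.sqrt (3-3*k^2)/(3*k) < (3*k+3)/(3*k) :=
          (div_lt_div_iff_of_pos_right h3k).mpr hss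
        have he : (3*k+3)/(3*k) = 1 + 1/k := by
          field_simp
        rw [he] at hdd
        have hneg : -1/k = -(1/k) := by ring
        unfold qzero
        rw [hneg]
        linarith
      have hc1 : ContinuousOn (fquartic k) (Set.Icc (qzero k) 0) :=
        (fquartic_cont k).continuousOn
      have hc2 : ContinuousOn (fquartic k) (Set.Icc (-1/k) (qzero k)) :=
        (fquartic_cont k).continuousOn
      obtain ⟨q1, hq1mem, hq1⟩ := intermediate_value_Ioo hq0.le hc1
        (show (0:ℝ) ∈ Set.Ioo (fquartic k (qzero k)) (fquartic k 0) by
          rw [f_zero]; exact ⟨hF, one_pos⟩)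
      obtain ⟨q2, hq2mem, hq2⟩ := intermediate_value_Ioo' hm1.le hc2
        (show (0:ℝ) ∈ Set.Ioo (fquartic k (qzero k)) (fquartic k (-1/k)) by
          rw [f_m1k k (ne_of_gt hk0)]
          exact ⟨hF, by positivity⟩)
      exact ⟨q1, q2, hq2mem.1, hq2mem.2, hq1mem.1, hq1mem.2, hq2, hq1⟩
  · -- part 4
    intro heq
    have hfacts := keq_facts k heq
    refine ⟨part2.mpr (by rw [heq]; exact kstar_lt_half), ?_, ?_⟩
    · have := G_eq k hk hfacts.1 hfacts.2
      nlinarith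
    · rw [deriv_factor k hk]
      unfold qzero
      ring
  · -- part 5
    intro hkgt q hq hf
    have hG := G_pos k hk hkgt
    have hF : 0 < fquartic k (qzero k) := by
      have h9 : 0 < 9*k*fquartic k (qzero k) := by
        rw [hkey]; exact mul_pos (by nlinarith) hG
      nlinarith [h9]
    rcases le_or_gt (qzero k) 0 with hq0 | hq0
    · have hmin : min (qzero k) 0 = qzero k := min_eq_left hq0
      rcases lt_trichotomy q (qzero k) with h | h | h
      · have := strictAnti_f k hk (by rw [hmin]; exact h.le) (by rw [hmin]; exact Set.self_mem_Iic) h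
        rw [hf] at this
        linarith
      · rw [h] at hf; linarith
      · have := strictMono_f k hk hq0 ⟨le_refl _, hq0⟩ ⟨h.le, hq.le⟩ h
        rw [hf] at this
        linarith
    · have hmin : min (qzero k) 0 = 0 := min_eq_right hq0.le
      have := strictAnti_f k hk (by rw [hmin]; exact hq.le) (by rw [hmin]; exact Set.self_mem_Iic) hq
      rw [hf, f_zero] at this
      linarith
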